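/- In a threshold graph T(B): if at least one 1-vertex is uncolored then no 1-vertex can force a 0-vertex; and if more than one 1-vertex is uncolored then no 1-vertex can force any of its neighbors. -/
import Mathlib


/-- The set of vertices eventually colored ("forced") by the zero forcing process
starting from the initially colored set `S`: a colored vertex with exactly one
uncolored neighbor forces that neighbor to become colored. -/
inductive SimpleGraph.Forced {V : Type*} (G : SimpleGraph V) (S : Set V) : V → Prop
  | mem {v : V} : v ∈ S → G.Forced S v
  | force {u v : V} : G.Adj u v → G.Forced S u →
      (∀ w, G.Adj u w → w ≠ v → G.Forced S w) → G.Forced S v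

/-- `S` is a zero forcing set of `G` if the zero forcing process starting from `S`
colors every vertex. -/
def SimpleGraph.IsZeroForcingSet {V : Type*} (G : SimpleGraph V) (S : Set V) : Prop :=
  ∀ v, G.Forced S v

/-- `z(G;i)`: the number of zero forcing sets of `G` of size `i`. -/
noncomputable def SimpleGraph.zcount {V : Type*} [Fintype V] (G : SimpleGraph V) (i : ℕ) : ℕ :=
  Nat.card {S : Finset V // S.card = i ∧ G.IsZeroForcingSet ↑S}

/-- `Z(G)`: the zero forcing number, the minimum size of a zero forcing set. -/
noncomputable def SimpleGraph.zfNumber {V : Type*} [Fintype V] (G : SimpleGraph V) : ℕ :=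
  sInf {i | ∃ S : Finset V, S.card = i ∧ G.IsZeroForcingSet ↑S}

/-- The zero forcing polynomial `𝒵(G;x) = ∑_{i=1}^n z(G;i) x^i`. -/
noncomputable def SimpleGraph.zfPoly {V : Type*} [Fintype V] (G : SimpleGraph V) : Polynomial ℤ :=
  ∑ i ∈ Finset.Icc 1 (Fintype.card V), Polynomial.C (G.zcount i : ℤ) * Polynomial.X ^ i

/-- The path `P_n` on `n` vertices. -/
def pathG (n : ℕ) : SimpleGraph (Fin n) :=
  SimpleGraph.fromRel (fun i j => (i : ℕ) + 1 = j)

/-- The cycle `C_n` on `n` vertices. -/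
def cycleG (n : ℕ) : SimpleGraph (Fin n) :=
  SimpleGraph.fromRel (fun i j => ((i : ℕ) + 1) % n = j)

/-- The threshold graph generated by a binary string `B` (of length `n`). -/
def thresholdG (n : ℕ) (B : Fin n → Bool) : SimpleGraph (Fin n) :=
  SimpleGraph.fromRel (fun i j => i < j ∧ B j = true)

lemma thr_adj {n : ℕ} {B : Fin n → Bool} {u x : Fin n} (hu : B u = true) (hx : B x = true)
    (hne : u ≠ x) : (thresholdG n B).Adj u x := by
  refine ⟨hne, ?_⟩
  rcases lt_or_gt_of_ne hne with h | h
  · exact Or.inl ⟨h, hx⟩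
  · exact Or.inr ⟨h, hu⟩

/-- In a threshold graph, with colored set `C`: if some 1-vertex is uncolored
then no 1-vertex can force a 0-vertex; if more than one 1-vertex is uncolored then no
1-vertex can force any neighbor.  ("u can force v" means u is colored and v is its unique
uncolored neighbor.) -/
theorem threshold_one_vertices_cannot_force (n : ℕ) (B : Fin n → Bool) (C : Set (Fin n)) :
    ((∃ x, B x = true ∧ x ∉ C) → ∀ u v : Fin n, B u = true → B v = false →
      ¬(u ∈ C ∧ (thresholdG n B).Adj u v ∧ v ∉ C ∧
        ∀ w, (thresholdG n B).Adj u w → w ≠ v → w ∈ C)) ∧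
    ((∃ x y : Fin n, x ≠ y ∧ B x = true ∧ B y = true ∧ x ∉ C ∧ y ∉ C) →
      ∀ u v : Fin n, B u = true →
      ¬(u ∈ C ∧ (thresholdG n B).Adj u v ∧ v ∉ C ∧
        ∀ w, (thresholdG n B).Adj u w → w ≠ v → w ∈ C)) := by
  constructor
  · rintro ⟨x, hx, hxC⟩ u v hu hv ⟨huC, hadj, hvC, hall⟩
    have hxu : x ≠ u := fun h => hxC (h ▸ huC)
    have hxv : x ≠ v := fun h => by rw [h, hv] at hx; exact Bool.noConfusion hx
    exact hxC (hall x (thr_adj hu hx hxu.symm) hxv)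
  · rintro ⟨x, y, hxy, hx, hy, hxC, hyC⟩ u v hu ⟨huC, hadj, hvC, hall⟩
    by_cases hxv : x = v
    · have hyv : y ≠ v := fun h => hxy (hxv.trans h.symm)
      have hyu : y ≠ u := fun h => hyC (h ▸ huC)
      exact hyC (hall y (thr_adj hu hy hyu.symm) hyv)
    · have hxu : x ≠ u := fun h => hxC (h ▸ huC)
      exact hxC (hall x (thr_adj hu hx hxu.symm) hxv)
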